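/- arXiv:1707.05846 — 4 statements merged into one kernel-verified Lean document; each statement's English description precedes it below -/
import Mathlib

section
/- Let (yₙ) be defined by y₀ = 1 and y_{n+1} = yₙ² + 1 for all n ≥ 0, and let k = exp(∑_{n=0}^{∞} 2^{-(n+1)} · log(1 + yₙ^{-2})). Then for every n ≥ 0, yₙ = ⌊k^{2ⁿ}⌋. -/
/-- Aho–Sloane: with `y₀ = 1`, `y_{n+1} = yₙ² + 1` and
`k = exp(∑_{n=0}^{∞} 2^{-(n+1)} · log(1 + yₙ^{-2}))`, one has `yₙ = ⌊k^{2ⁿ}⌋` for all `n`. -/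
theorem aho_sloane_floor_formula (y : ℕ → ℕ)
    (h0 : y 0 = 1) (hrec : ∀ n, y (n + 1) = (y n) ^ 2 + 1)
    (k : ℝ)
    (hk : k = Real.exp (∑' n : ℕ, ((2 : ℝ) ^ (n + 1))⁻¹ * Real.log (1 + ((y n : ℝ) ^ 2)⁻¹))) :
    ∀ n : ℕ, (y n : ℤ) = ⌊k ^ (2 ^ n)⌋ := by
  have hy1 : ∀ n, 1 ≤ y n := by
    intro n
    induction n with
    | zero => omega
    | succ n ih => rw [hrec]; exact Nat.le_add_left 1 _
  have hyR : ∀ n, (1 : ℝ) ≤ (y n : ℝ) := fun n => by exact_mod_cast hy1 n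
  set f : ℕ → ℝ := fun n => ((2 : ℝ) ^ (n + 1))⁻¹ * Real.log (1 + ((y n : ℝ) ^ 2)⁻¹) with hf
  have hfnonneg : ∀ n, 0 ≤ f n := by
    intro n
    apply mul_nonneg (by positivity)
    apply Real.log_nonneg
    have h1 : (0 : ℝ) ≤ ((y n : ℝ) ^ 2)⁻¹ := by positivity
    linarith
  have hgsum : Summable (fun n : ℕ => ((2 : ℝ)⁻¹) ^ (n + 1) * Real.log 2) := by
    have base : Summable (fun n : ℕ => ((2 : ℝ)⁻¹) ^ n * Real.log 2) :=
      (summable_geometric_of_lt_one (by norm_num) (by norm_num)).mul_right _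
    have := base.mul_left ((2 : ℝ)⁻¹)
    apply this.congr
    intro n
    ring
  have hsum : Summable f := by
    apply Summable.of_nonneg_of_le hfnonneg _ hgsum
    intro n
    show ((2 : ℝ) ^ (n + 1))⁻¹ * Real.log (1 + ((y n : ℝ) ^ 2)⁻¹)
        ≤ ((2 : ℝ)⁻¹) ^ (n + 1) * Real.log 2
    rw [← inv_pow]
    apply mul_le_mul_of_nonneg_left _ (by positivity)
    apply Real.log_le_log (by positivity)
    have h1 : (1 : ℝ) ≤ (y n : ℝ) ^ 2 := by nlinarith [hyR n]
    have h2 : ((y n : ℝ) ^ 2)⁻¹ ≤ 1 := by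
      rw [inv_le_one_iff₀]; right; exact h1
    linarith
  set L : ℝ := ∑' n, f n with hL
  have hlog : ∀ N, Real.log (y (N + 1) : ℝ)
      = 2 * Real.log (y N : ℝ) + Real.log (1 + ((y N : ℝ) ^ 2)⁻¹) := by
    intro N
    have hyN : (0 : ℝ) < (y N : ℝ) := lt_of_lt_of_le one_pos (hyR N)
    have h2 : ((y (N + 1)) : ℝ) = (y N : ℝ) ^ 2 * (1 + ((y N : ℝ) ^ 2)⁻¹) := by
      rw [hrec N]; push_cast; field_simp
    rw [h2, Real.log_mul (by positivity) (by positivity), Real.log_pow]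
    push_cast; ring
  have hpart : ∀ N, ∑ m ∈ Finset.range N, f m = ((2 : ℝ) ^ N)⁻¹ * Real.log (y N : ℝ) := by
    intro N
    induction N with
    | zero => simp [h0]
    | succ N ih =>
      rw [Finset.sum_range_succ, ih]
      show (2 ^ N : ℝ)⁻¹ * Real.log (y N : ℝ)
          + ((2 : ℝ) ^ (N + 1))⁻¹ * Real.log (1 + ((y N : ℝ) ^ 2)⁻¹)
          = ((2 : ℝ) ^ (N + 1))⁻¹ * Real.log (y (N + 1) : ℝ)
      rw [hlog N]
      generalize Real.log (y N : ℝ) = a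
      generalize Real.log (1 + ((y N : ℝ) ^ 2)⁻¹) = b
      rw [pow_succ]
      field_simp
  have htend : Filter.Tendsto (fun N => ((2 : ℝ) ^ N)⁻¹ * Real.log (y N : ℝ))
      Filter.atTop (nhds L) := by
    have := hsum.hasSum.tendsto_sum_nat
    exact this.congr (fun N => hpart N)
  -- g monotone
  have hgmono : Monotone (fun N => ((2 : ℝ) ^ N)⁻¹ * Real.log (y N : ℝ)) := by
    apply monotone_nat_of_le_succ
    intro N
    rw [hlog N]
    have hlognn : 0 ≤ Real.log (1 + ((y N : ℝ) ^ 2)⁻¹) := by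
      apply Real.log_nonneg
      have h1 : (0 : ℝ) ≤ ((y N : ℝ) ^ 2)⁻¹ := by positivity
      linarith
    have h2 : ((2 : ℝ) ^ (N + 1))⁻¹ * (2 * Real.log (y N : ℝ))
        = ((2 : ℝ) ^ N)⁻¹ * Real.log (y N : ℝ) := by
      field_simp; ring
    have hp : (0 : ℝ) < ((2 : ℝ) ^ (N + 1))⁻¹ := by positivity
    nlinarith [mul_nonneg hp.le hlognn]
  -- h antitone
  have hhanti : Antitone (fun N => ((2 : ℝ) ^ N)⁻¹ * Real.log ((y N : ℝ) + 1)) := by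
    apply antitone_nat_of_succ_le
    intro N
    have hstep : Real.log ((y (N + 1) : ℝ) + 1) ≤ 2 * Real.log ((y N : ℝ) + 1) := by
      have hsq : Real.log (((y N : ℝ) + 1) ^ 2) = 2 * Real.log ((y N : ℝ) + 1) := by
        rw [Real.log_pow]; push_cast; ring
      rw [← hsq]
      apply Real.log_le_log (by positivity)
      rw [hrec N]; push_cast; nlinarith [hyR N]
    have hp : (0 : ℝ) < ((2 : ℝ) ^ (N + 1))⁻¹ := by positivity
    have h2 : ((2 : ℝ) ^ (N + 1))⁻¹ * (2 * Real.log ((y N : ℝ) + 1))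
        = ((2 : ℝ) ^ N)⁻¹ * Real.log ((y N : ℝ) + 1) := by
      field_simp; ring
    nlinarith [mul_le_mul_of_nonneg_left hstep hp.le]
  have hlow : ∀ n, ((2 : ℝ) ^ n)⁻¹ * Real.log (y n : ℝ) ≤ L := by
    intro n
    apply ge_of_tendsto htend
    filter_upwards [Filter.eventually_ge_atTop n] with N hN
    exact hgmono hN
  have hupp : ∀ n, L ≤ ((2 : ℝ) ^ n)⁻¹ * Real.log ((y n : ℝ) + 1) := by
    intro n
    apply le_of_tendsto htend
    filter_upwards [Filter.eventually_ge_atTop n] with N hN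
    calc ((2 : ℝ) ^ N)⁻¹ * Real.log (y N : ℝ)
        ≤ ((2 : ℝ) ^ N)⁻¹ * Real.log ((y N : ℝ) + 1) := by
          apply mul_le_mul_of_nonneg_left _ (by positivity)
          exact Real.log_le_log (lt_of_lt_of_le one_pos (hyR N)) (by linarith)
      _ ≤ ((2 : ℝ) ^ n)⁻¹ * Real.log ((y n : ℝ) + 1) := hhanti hN
  intro n
  have hk2 : k ^ (2 ^ n) = Real.exp ((2 : ℝ) ^ n * L) := by
    rw [hk, ← Real.exp_nat_mul]
    congr 1
    push_cast
    ring
  have hyn : (0 : ℝ) < (y n : ℝ) := lt_of_lt_of_le one_pos (hyR n)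
  -- lower bound
  have hlb : (y n : ℝ) ≤ k ^ (2 ^ n) := by
    rw [hk2]
    have := mul_le_mul_of_nonneg_left (hlow n) (by positivity : (0:ℝ) ≤ (2:ℝ) ^ n)
    have heq : (2 : ℝ) ^ n * (((2 : ℝ) ^ n)⁻¹ * Real.log (y n : ℝ)) = Real.log (y n : ℝ) := by
      field_simp
    rw [heq] at this
    calc (y n : ℝ) = Real.exp (Real.log (y n : ℝ)) := (Real.exp_log hyn).symm
      _ ≤ Real.exp ((2 : ℝ) ^ n * L) := Real.exp_le_exp.mpr this
  -- upper bound, strict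
  have hub : k ^ (2 ^ n) < (y n : ℝ) + 1 := by
    rw [hk2]
    have h1 := hupp (n + 1)
    have h2 : Real.log ((y (n + 1) : ℝ) + 1) < 2 * Real.log ((y n : ℝ) + 1) := by
      have hsq : Real.log (((y n : ℝ) + 1) ^ 2) = 2 * Real.log ((y n : ℝ) + 1) := by
        rw [Real.log_pow]; push_cast; ring
      rw [← hsq]
      apply Real.log_lt_log (by positivity)
      rw [hrec n]; push_cast; nlinarith [hyR n]
    have h3 : (2 : ℝ) ^ (n + 1) * L < 2 * Real.log ((y n : ℝ) + 1) := by
      have hmul := mul_le_mul_of_nonneg_left h1 (by positivity : (0:ℝ) ≤ (2:ℝ) ^ (n+1))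
      have heq : (2 : ℝ) ^ (n + 1) * (((2 : ℝ) ^ (n + 1))⁻¹ * Real.log ((y (n+1) : ℝ) + 1))
          = Real.log ((y (n+1) : ℝ) + 1) := by field_simp
      rw [heq] at hmul
      linarith
    have h4 : (2 : ℝ) ^ n * L < Real.log ((y n : ℝ) + 1) := by
      have hpe : (2 : ℝ) ^ (n + 1) = 2 * 2 ^ n := by ring
      rw [hpe] at h3
      linarith
    calc Real.exp ((2 : ℝ) ^ n * L) < Real.exp (Real.log ((y n : ℝ) + 1)) :=
          Real.exp_lt_exp.mpr h4
      _ = (y n : ℝ) + 1 := Real.exp_log (by positivity)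
  symm
  rw [Int.floor_eq_iff]
  constructor
  · push_cast; exact hlb
  · push_cast; exact hub
end

section
/- Let (yₙ) be defined by y₀ = 1 and y_{n+1} = yₙ² + 1 for all n ≥ 0, and let k = exp(∑_{n=0}^{∞} 2^{-(n+1)} · log(1 + yₙ^{-2})). Then 1.5028 < k < 1.5029. -/
set_option maxHeartbeats 2000000

open Finset Real

/-- With `y₀ = 1`, `y_{n+1} = yₙ² + 1` and
`k = exp(∑_{n=0}^{∞} 2^{-(n+1)} · log(1 + yₙ^{-2}))`, one has `1.5028 < k < 1.5029`. -/
theorem aho_sloane_constant_bounds (y : ℕ → ℕ)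
    (h0 : y 0 = 1) (hrec : ∀ n, y (n + 1) = (y n) ^ 2 + 1)
    (k : ℝ)
    (hk : k = Real.exp (∑' n : ℕ, ((2 : ℝ) ^ (n + 1))⁻¹ * Real.log (1 + ((y n : ℝ) ^ 2)⁻¹))) :
    1.5028 < k ∧ k < 1.5029 := by
  set f : ℕ → ℝ := fun n => ((2 : ℝ) ^ (n + 1))⁻¹ * Real.log (1 + ((y n : ℝ) ^ 2)⁻¹) with hf
  -- basic values
  have hy1 : y 1 = 2 := by rw [hrec, h0]; norm_num
  have hy2 : y 2 = 5 := by rw [hrec, hy1]; norm_num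
  have hy3 : y 3 = 26 := by rw [hrec, hy2]; norm_num
  have hy4 : y 4 = 677 := by rw [hrec, hy3]; norm_num
  have hyge : ∀ n, 1 ≤ y n := by
    intro n
    induction n with
    | zero => omega
    | succ m ih => rw [hrec]; nlinarith
  have hyge4 : ∀ n, 677 ≤ y (n + 4) := by
    intro n
    induction n with
    | zero => show 677 ≤ y 4; omega
    | succ m ih =>
      have := hrec (m + 4)
      have : y (m + 4 + 1) = y (m + 4) ^ 2 + 1 := hrec _
      calc (677 : ℕ) ≤ y (m + 4) ^ 2 + 1 := by nlinarith
        _ = y (m + 4 + 1) := (hrec _).symm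
  -- nonnegativity and a summable upper bound
  have hnonneg : ∀ n, 0 ≤ f n := by
    intro n
    apply mul_nonneg (by positivity)
    apply Real.log_nonneg
    nlinarith [inv_nonneg.mpr (sq_nonneg ((y n : ℝ)))]
  have hle : ∀ n, f n ≤ (1 / 2 : ℝ) ^ (n + 1) * Real.log 2 := by
    intro n
    have h1 : (1 : ℝ) ≤ (y n : ℝ) := by exact_mod_cast hyge n
    have h2 : ((y n : ℝ) ^ 2)⁻¹ ≤ 1 := by
      rw [inv_le_one_iff₀]; right; nlinarith
    have h3 : Real.log (1 + ((y n : ℝ) ^ 2)⁻¹) ≤ Real.log 2 := by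
      apply Real.log_le_log (by positivity); linarith
    have h4 : ((2 : ℝ) ^ (n + 1))⁻¹ = (1 / 2 : ℝ) ^ (n + 1) := by
      rw [one_div, inv_pow]
    rw [hf]
    simp only []
    rw [h4]
    exact mul_le_mul_of_nonneg_left h3 (by positivity)
  have hsum : Summable f := by
    apply Summable.of_nonneg_of_le hnonneg hle
    have : Summable (fun n : ℕ => (1 / 2 : ℝ) ^ n * Real.log 2) :=
      (summable_geometric_of_lt_one (by norm_num) (by norm_num)).mul_right _
    simpa [pow_succ, mul_comm, mul_assoc, mul_left_comm] using
      ((summable_nat_add_iff 1).mpr this : Summable fun n : ℕ => (1/2:ℝ)^(n+1) * Real.log 2)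
  -- split off the first four terms
  have hsplit : (∑ i ∈ range 4, f i) + ∑' i, f (i + 4) = ∑' i, f i :=
    Summable.sum_add_tsum_nat_add 4 hsum
  set T : ℝ := ∑' i, f (i + 4) with hT
  have hT0 : 0 ≤ T := tsum_nonneg fun i => hnonneg _
  -- tail bound
  have htail_le : ∀ n : ℕ, f (n + 4) ≤ (1 / 2 : ℝ) ^ n * (1 / 32) * (458329 : ℝ)⁻¹ := by
    intro n
    have hyn : (677 : ℝ) ≤ (y (n + 4) : ℝ) := by exact_mod_cast hyge4 n
    have hsq : (458329 : ℝ) ≤ (y (n + 4) : ℝ) ^ 2 := by nlinarith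
    have hinv : ((y (n + 4) : ℝ) ^ 2)⁻¹ ≤ (458329 : ℝ)⁻¹ := by
      apply inv_anti₀ (by norm_num) hsq
    have hlog : Real.log (1 + ((y (n + 4) : ℝ) ^ 2)⁻¹) ≤ (458329 : ℝ)⁻¹ := by
      have := Real.log_le_sub_one_of_pos
        (show (0:ℝ) < 1 + ((y (n + 4) : ℝ) ^ 2)⁻¹ by positivity)
      linarith
    have hpow : ((2 : ℝ) ^ (n + 4 + 1))⁻¹ ≤ (1 / 2 : ℝ) ^ n * (1 / 32) := by
      rw [show n + 4 + 1 = n + 5 by ring, pow_add]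
      rw [mul_inv, ← inv_pow, inv_eq_one_div]
      norm_num
    have hlog0 : 0 ≤ Real.log (1 + ((y (n + 4) : ℝ) ^ 2)⁻¹) := by
      apply Real.log_nonneg
      nlinarith [inv_nonneg.mpr (sq_nonneg ((y (n+4) : ℝ)))]
    calc f (n + 4) = ((2 : ℝ) ^ (n + 4 + 1))⁻¹ * Real.log (1 + ((y (n + 4) : ℝ) ^ 2)⁻¹) := rfl
      _ ≤ ((1 / 2 : ℝ) ^ n * (1 / 32)) * (458329 : ℝ)⁻¹ := by
          apply mul_le_mul hpow hlog hlog0 (by positivity)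
  have hTle : T ≤ (1 / 16 : ℝ) * (458329 : ℝ)⁻¹ := by
    have hgs : Summable (fun n : ℕ => (1 / 2 : ℝ) ^ n * (1 / 32) * (458329 : ℝ)⁻¹) :=
      ((summable_geometric_of_lt_one (by norm_num) (by norm_num)).mul_right _).mul_right _
    have := Summable.tsum_le_tsum htail_le ((summable_nat_add_iff 4).mpr hsum) hgs
    rw [hT]
    refine this.trans ?_
    rw [show (fun n : ℕ => (1 / 2 : ℝ) ^ n * (1 / 32) * (458329 : ℝ)⁻¹)
        = (fun n : ℕ => (1 / 2 : ℝ) ^ n * ((1 / 32) * (458329 : ℝ)⁻¹)) by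
      funext n; ring]
    rw [tsum_mul_right, tsum_geometric_of_lt_one (by norm_num) (by norm_num)]
    norm_num
  -- compute the head
  have hhead : ∑ i ∈ range 4, f i
      = (1/2) * Real.log 2 + (1/4) * Real.log (5/4)
        + (1/8) * Real.log (26/25) + (1/16) * Real.log (677/676) := by
    rw [Finset.sum_range_succ, Finset.sum_range_succ, Finset.sum_range_succ,
      Finset.sum_range_one]
    rw [hf]
    simp only [h0, hy1, hy2, hy3]
    norm_num
  -- numeric bounds for logs
  have hlog2a := Real.log_two_gt_d9
  have hlog2b := Real.log_two_lt_d9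
  have habsB : |(-(4⁻¹ : ℝ))| = 4⁻¹ := by rw [abs_neg, abs_of_pos]; norm_num
  have hB := abs_log_sub_add_sum_range_le (x := -(4⁻¹ : ℝ)) (by rw [habsB]; norm_num) 8
  rw [habsB, abs_le] at hB
  norm_num [Finset.sum_range_succ] at hB
  have habsC : |(-(25⁻¹ : ℝ))| = 25⁻¹ := by rw [abs_neg, abs_of_pos]; norm_num
  have hC := abs_log_sub_add_sum_range_le (x := -(25⁻¹ : ℝ)) (by rw [habsC]; norm_num) 3
  rw [habsC, abs_le] at hC
  norm_num [Finset.sum_range_succ] at hC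
  have habsD : |(-(676⁻¹ : ℝ))| = 676⁻¹ := by rw [abs_neg, abs_of_pos]; norm_num
  have hD := abs_log_sub_add_sum_range_le (x := -(676⁻¹ : ℝ)) (by rw [habsD]; norm_num) 1
  rw [habsD, abs_le] at hD
  norm_num [Finset.sum_range_succ] at hD
  have habsE : |(0.2486 : ℝ)| = 0.2486 := abs_of_pos (by norm_num)
  have hE := abs_log_sub_add_sum_range_le (x := (0.2486 : ℝ)) (by rw [habsE]; norm_num) 10
  rw [habsE, abs_le] at hE
  norm_num [Finset.sum_range_succ] at hE
  have habsF : |(0.24855 : ℝ)| = 0.24855 := abs_of_pos (by norm_num)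
  have hF := abs_log_sub_add_sum_range_le (x := (0.24855 : ℝ)) (by rw [habsF]; norm_num) 10
  rw [habsF, abs_le] at hF
  norm_num [Finset.sum_range_succ] at hF
  -- the sum
  have hS : ∑' i, f i
      = (1/2) * Real.log 2 + (1/4) * Real.log (5/4)
        + (1/8) * Real.log (26/25) + (1/16) * Real.log (677/676) + T := by
    rw [← hsplit, hhead]
  have h1 : (1.5028 : ℝ) = 2 * 0.7514 := by norm_num
  have h2 : (1.5029 : ℝ) = 2 * 0.75145 := by norm_num
  have hlogA : Real.log 1.5028 = Real.log 2 + Real.log 0.7514 := by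
    rw [h1, Real.log_mul (by norm_num) (by norm_num)]
  have hlogB : Real.log 1.5029 = Real.log 2 + Real.log 0.75145 := by
    rw [h2, Real.log_mul (by norm_num) (by norm_num)]
  have hEq : (1 : ℝ) - 0.2486 = 0.7514 := by norm_num
  have hFq : (1 : ℝ) - 0.24855 = 0.75145 := by norm_num
  subst hk
  constructor
  · rw [show (1.5028 : ℝ) = Real.exp (Real.log 1.5028) by
      rw [Real.exp_log]; norm_num]
    rw [Real.exp_lt_exp, hlogA, hS]
    have hE' : Real.log (0.7514 : ℝ) = Real.log (3757 / 5000) := by norm_num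
    rw [hE']
    linarith [hB.1, hC.1, hD.1, hE.2]
  · rw [show (1.5029 : ℝ) = Real.exp (Real.log 1.5029) by
      rw [Real.exp_log]; norm_num]
    rw [Real.exp_lt_exp, hlogB, hS]
    have hF' : Real.log (0.75145 : ℝ) = Real.log (15029 / 20000) := by norm_num
    rw [hF']
    linarith [hB.2, hC.2, hD.2, hF.1]
end

section
/- Let (yₙ) be defined by y₀ = 1 and y_{n+1} = yₙ² + 1 for all n ≥ 0, and let k = exp(∑_{n=0}^{∞} 2^{-(n+1)} · log(1 + yₙ^{-2})). Then the sequence 2ⁿ / log₂(yₙ) (defined for n ≥ 1) converges to log 2 / log k as n → ∞, and this limit L satisfies 1.7015 < L < 1.7016. -/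
open Filter

set_option maxHeartbeats 1600000 in
/-- With `y₀ = 1`, `y_{n+1} = yₙ² + 1` and
`k = exp(∑_{n=0}^{∞} 2^{-(n+1)} · log(1 + yₙ^{-2}))`, the asymptotic complexity coefficients
`2ⁿ / log₂(yₙ)` converge to `L = log 2 / log k`, and `1.7015 < L < 1.7016`. -/
theorem asymptotic_complexity_coefficient (y : ℕ → ℕ)
    (h0 : y 0 = 1) (hrec : ∀ n, y (n + 1) = (y n) ^ 2 + 1)
    (k : ℝ)
    (hk : k = Real.exp (∑' n : ℕ, ((2 : ℝ) ^ (n + 1))⁻¹ * Real.log (1 + ((y n : ℝ) ^ 2)⁻¹))) :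
    Tendsto (fun n : ℕ => (2 : ℝ) ^ n / (Real.log (y n) / Real.log 2)) atTop
      (nhds (Real.log 2 / Real.log k)) ∧
    1.7015 < Real.log 2 / Real.log k ∧ Real.log 2 / Real.log k < 1.7016 := by
  have hy1 : ∀ n, 1 ≤ y n := by
    intro n
    induction n with
    | zero => simp [h0]
    | succ n ih => rw [hrec]; nlinarith
  have hyR : ∀ n, (1:ℝ) ≤ (y n : ℝ) := fun n => by exact_mod_cast hy1 n
  set f : ℕ → ℝ := fun n => ((2 : ℝ) ^ (n + 1))⁻¹ * Real.log (1 + ((y n : ℝ) ^ 2)⁻¹)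
    with hfdef
  have hfnn : ∀ n, 0 ≤ f n := by
    intro n
    apply mul_nonneg (by positivity)
    apply Real.log_nonneg
    have : 0 ≤ (((y n : ℝ)) ^ 2)⁻¹ := by positivity
    linarith
  have hfle : ∀ n, f n ≤ ((2 : ℝ) ^ (n + 1))⁻¹ * (((y n : ℝ)) ^ 2)⁻¹ := by
    intro n
    have hpos : (0:ℝ) < 1 + (((y n : ℝ)) ^ 2)⁻¹ := by positivity
    have hlog := Real.log_le_sub_one_of_pos hpos
    have h2 : (0:ℝ) ≤ ((2 : ℝ) ^ (n + 1))⁻¹ := by positivity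
    calc f n ≤ ((2 : ℝ) ^ (n + 1))⁻¹ * (1 + (((y n : ℝ)) ^ 2)⁻¹ - 1) := by
          exact mul_le_mul_of_nonneg_left hlog h2
      _ = ((2 : ℝ) ^ (n + 1))⁻¹ * (((y n : ℝ)) ^ 2)⁻¹ := by ring
  have hfle2 : ∀ n, f n ≤ (1/2 : ℝ) ^ n := by
    intro n
    have h1 : (((y n : ℝ)) ^ 2)⁻¹ ≤ 1 := by
      rw [inv_le_one_iff₀]
      right
      nlinarith [hyR n]
    calc f n ≤ ((2 : ℝ) ^ (n + 1))⁻¹ * (((y n : ℝ)) ^ 2)⁻¹ := hfle n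
      _ ≤ ((2 : ℝ) ^ (n + 1))⁻¹ * 1 := by
          exact mul_le_mul_of_nonneg_left h1 (by positivity)
      _ ≤ (1/2 : ℝ) ^ n := by
          rw [mul_one]
          have heq : ((2:ℝ) ^ (n+1))⁻¹ = (1/2 : ℝ) ^ (n+1) := by
            rw [div_pow, one_pow, one_div]
          rw [heq]
          exact pow_le_pow_of_le_one (by norm_num) (by norm_num) (Nat.le_succ n)
  have hsum : Summable f :=
    Summable.of_nonneg_of_le hfnn hfle2
      (summable_geometric_of_lt_one (by norm_num) (by norm_num))
  have hlogk : Real.log k = ∑' n, f n := by rw [hk, Real.log_exp]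
  -- partial sums
  have hyne : ∀ n, ((y n : ℝ)) ≠ 0 := fun n => by
    have := hyR n; linarith
  have hpartial : ∀ n, ∑ m ∈ Finset.range n, f m = Real.log (y n) / 2 ^ n := by
    intro n
    induction n with
    | zero => simp [h0]
    | succ n ih =>
      rw [Finset.sum_range_succ, ih]
      have hcast : ((y (n+1) : ℝ)) = ((y n : ℝ)) ^ 2 + 1 := by
        rw [hrec]; push_cast; ring
      have hfactor : ((y n : ℝ)) ^ 2 + 1 = ((y n : ℝ)) ^ 2 * (1 + (((y n : ℝ)) ^ 2)⁻¹) := by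
        rw [mul_add, mul_one, mul_inv_cancel₀ (pow_ne_zero 2 (hyne n))]
      have hlogstep : Real.log (y (n+1)) =
          2 * Real.log (y n) + Real.log (1 + (((y n : ℝ)) ^ 2)⁻¹) := by
        rw [hcast, hfactor, Real.log_mul (pow_ne_zero 2 (hyne n)) (by positivity), Real.log_pow]
        push_cast; ring
      rw [hlogstep, hfdef]
      have h2n : ((2:ℝ)^n) ≠ 0 := by positivity
      have h2n1 : ((2:ℝ)^(n+1)) ≠ 0 := by positivity
      field_simp
      ring
  -- convergence
  have h2 := hsum.hasSum.tendsto_sum_nat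
  simp only [hpartial] at h2
  rw [← hlogk] at h2
  -- split off first 4 terms
  have hsplit : ∑ i ∈ Finset.range 4, f i + ∑' i, f (i + 4) = ∑' i, f i :=
    Summable.sum_add_tsum_nat_add 4 hsum
  -- explicit values
  have e1 : y 1 = 2 := by rw [hrec, h0]; norm_num
  have e2 : y 2 = 5 := by rw [hrec, e1]; norm_num
  have e3 : y 3 = 26 := by rw [hrec, e2]; norm_num
  have e4 : y 4 = 677 := by rw [hrec, e3]; norm_num
  have hS4 : ∑ i ∈ Finset.range 4, f i =
      (2:ℝ)⁻¹ * Real.log 2 + (4:ℝ)⁻¹ * Real.log (5/4) + (8:ℝ)⁻¹ * Real.log (26/25)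
        + (16:ℝ)⁻¹ * Real.log (677/676) := by
    simp only [hfdef, Finset.sum_range_succ, Finset.sum_range_zero, h0, e1, e2, e3]
    norm_num
  -- monotone: y (i+4) ≥ 677
  have hmono : ∀ n, y n ≤ y (n + 1) := by
    intro n; rw [hrec]; nlinarith [hy1 n]
  have hy4 : ∀ i, 677 ≤ y (i + 4) := by
    intro i
    induction i with
    | zero => rw [e4]
    | succ i ih => calc 677 ≤ y (i+4) := ih
                     _ ≤ y (i+4+1) := hmono _
  -- tail bounds
  have htail_nn : 0 ≤ ∑' i, f (i + 4) := tsum_nonneg fun i => hfnn _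
  have htail_le : ∑' i, f (i + 4) ≤ (1/2 : ℝ) ^ 20 := by
    have hterm : ∀ i, f (i + 4) ≤ (1/2 : ℝ) ^ 21 * (1/2 : ℝ) ^ i := by
      intro i
      have hy : (256:ℝ) ≤ ((y (i+4) : ℝ)) := by
        have := hy4 i
        have : (677:ℝ) ≤ ((y (i+4) : ℝ)) := by exact_mod_cast this
        linarith
      have hinv : (((y (i+4) : ℝ)) ^ 2)⁻¹ ≤ ((256:ℝ) ^ 2)⁻¹ := by
        apply inv_anti₀ (by norm_num)
        nlinarith
      calc f (i + 4) ≤ ((2 : ℝ) ^ (i + 4 + 1))⁻¹ * (((y (i+4) : ℝ)) ^ 2)⁻¹ := hfle _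
        _ ≤ ((2 : ℝ) ^ (i + 5))⁻¹ * ((256:ℝ) ^ 2)⁻¹ := by
            apply mul_le_mul_of_nonneg_left hinv (by positivity)
        _ = (1/2 : ℝ) ^ 21 * (1/2 : ℝ) ^ i := by
            rw [pow_add, mul_inv]
            norm_num [← inv_pow]
            ring
    calc ∑' i, f (i + 4) ≤ ∑' i, (1/2 : ℝ) ^ 21 * (1/2 : ℝ) ^ i := by
          apply Summable.tsum_le_tsum hterm ((summable_nat_add_iff 4).mpr hsum)
          exact ((summable_geometric_of_lt_one (by norm_num) (by norm_num)).mul_left _)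
      _ = (1/2 : ℝ) ^ 21 * (1 - 1/2)⁻¹ := by
          rw [tsum_mul_left, tsum_geometric_of_lt_one (by norm_num) (by norm_num)]
      _ ≤ (1/2 : ℝ) ^ 20 := by norm_num
  -- numeric bounds on the individual logs
  have habs4 : |(-(4⁻¹:ℝ))| = 4⁻¹ := by rw [abs_neg, abs_of_nonneg]; norm_num
  have h54 := Real.abs_log_sub_add_sum_range_le (x := -(4⁻¹ : ℝ)) (by rw [habs4]; norm_num) 9
  rw [habs4, abs_le] at h54
  simp only [Finset.sum_range_succ, Finset.sum_range_zero] at h54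
  norm_num at h54
  obtain ⟨h54a, h54b⟩ := h54
  have habs25 : |(-(25⁻¹:ℝ))| = 25⁻¹ := by rw [abs_neg, abs_of_nonneg]; norm_num
  have h2625 := Real.abs_log_sub_add_sum_range_le (x := -(25⁻¹ : ℝ)) (by rw [habs25]; norm_num) 4
  rw [habs25, abs_le] at h2625
  simp only [Finset.sum_range_succ, Finset.sum_range_zero] at h2625
  norm_num at h2625
  obtain ⟨ha, hb⟩ := h2625
  have habs676 : |(-(676⁻¹:ℝ))| = 676⁻¹ := by rw [abs_neg, abs_of_nonneg]; norm_num
  have h677 := Real.abs_log_sub_add_sum_range_le (x := -(676⁻¹ : ℝ)) (by rw [habs676]; norm_num) 2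
  rw [habs676, abs_le] at h677
  simp only [Finset.sum_range_succ, Finset.sum_range_zero] at h677
  norm_num at h677
  obtain ⟨hc, hd⟩ := h677
  have hl54 : (0.2231423 : ℝ) ≤ Real.log (5/4) ∧ Real.log (5/4) ≤ 0.2231450 :=
    ⟨by linarith, by linarith⟩
  have hl2625 : (0.0392205 : ℝ) ≤ Real.log (26/25) ∧ Real.log (26/25) ≤ 0.0392209 :=
    ⟨by linarith, by linarith⟩
  have hl677 : (0.0014781 : ℝ) ≤ Real.log (677/676) ∧ Real.log (677/676) ≤ 0.0014782 :=
    ⟨by linarith, by linarith⟩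
  -- bounds on log k
  have hkeq : Real.log k = ∑ i ∈ Finset.range 4, f i + ∑' i, f (i + 4) := by
    rw [hlogk]; exact hsplit.symm
  have hklb : (0.4073538 : ℝ) ≤ Real.log k := by
    rw [hkeq, hS4]
    have := Real.log_two_gt_d9
    have h20 : (0:ℝ) ≤ (1/2:ℝ)^20 := by positivity
    linarith [hl54.1, hl2625.1, hl677.1, htail_nn]
  have hkub : Real.log k ≤ (0.4073562 : ℝ) := by
    rw [hkeq, hS4]
    have := Real.log_two_lt_d9
    have h20 : ((1/2:ℝ)^20 : ℝ) ≤ 0.00000096 := by norm_num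
    linarith [hl54.2, hl2625.2, hl677.2, htail_le]
  have hkpos : 0 < Real.log k := by linarith
  refine ⟨?_, ?_, ?_⟩
  · have heq : (fun n : ℕ => (2 : ℝ) ^ n / (Real.log (y n) / Real.log 2)) =
        fun n : ℕ => Real.log 2 / (Real.log (y n) / 2 ^ n) := by
      funext n
      rw [div_div_eq_mul_div, div_div_eq_mul_div]
      ring
    rw [heq]
    exact Tendsto.div tendsto_const_nhds h2 hkpos.ne'
  · rw [lt_div_iff₀ hkpos]
    linarith [Real.log_two_gt_d9]
  · rw [div_lt_iff₀ hkpos]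
    linarith [Real.log_two_lt_d9]
end

section
/- Let M be the 6×6 real matrix with rows (1/3, 1/3, 0, 0, 0, 0), (0, 0, 1/2, 1/3, 1/3, 0), (1/3, 1/3, 0, 0, 0, 1/2), (0, 0, 0, 1/3, 1/3, 0), (1/3, 1/3, 1/2, 0, 0, 0), (0, 0, 0, 1/3, 1/3, 1/2), and let u = (1/6, 1/6, 1/6, 1/6, 1/6, 1/6)ᵀ. Then the iterates Mⁿ·u converge, as n → ∞, to the vector p = (1/10, 2/10, 2/10, 1/10, 2/10, 2/10)ᵀ. -/
open Filter

/-- The column-stochastic transition matrix of the Markov chain on residues mod 6 arising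
from the mixed base-{2,3} decomposition of geometric series. -/
noncomputable def markovM : Matrix (Fin 6) (Fin 6) ℝ :=
  !![1/3, 1/3, 0,   0,   0,   0;
     0,   0,   1/2, 1/3, 1/3, 0;
     1/3, 1/3, 0,   0,   0,   1/2;
     0,   0,   0,   1/3, 1/3, 0;
     1/3, 1/3, 1/2, 0,   0,   0;
     0,   0,   0,   1/3, 1/3, 1/2]

lemma cons_val_five' {α : Type*} (a b c d e f : α) : (![a,b,c,d,e,f] : Fin 6 → α) 5 = f := rfl

noncomputable def iterVec (n : ℕ) : Fin 6 → ℝ :=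
  ![1/10 + (1/6:ℝ)^n/15, 2/10 - (1/6:ℝ)^n/30, 2/10 - (1/6:ℝ)^n/30,
    1/10 + (1/6:ℝ)^n/15, 2/10 - (1/6:ℝ)^n/30, 2/10 - (1/6:ℝ)^n/30]

lemma iter_eq (n : ℕ) :
    (markovM ^ n).mulVec ![1/6, 1/6, 1/6, 1/6, 1/6, 1/6] = iterVec n := by
  induction n with
  | zero =>
    funext i
    fin_cases i <;>
      simp [iterVec, Matrix.mulVec, dotProduct, Fin.sum_univ_six] <;> norm_num
  | succ n ih =>
    rw [pow_succ', ← Matrix.mulVec_mulVec, ih]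
    simp only [iterVec, markovM, Matrix.cons_mulVec, Matrix.empty_mulVec,
      Matrix.cons_dotProduct_cons, Matrix.dotProduct_of_isEmpty, pow_succ]
    simp only [Matrix.vecCons, Fin.cons_inj]
    refine ⟨by ring, by ring, by ring, by ring, by ring, by ring, trivial⟩

/-- Starting from the uniform vector `u = (1/6,…,1/6)ᵀ`, the iterates `Mⁿ·u` converge
(entrywise) to the stationary vector `p = (1/10, 2/10, 2/10, 1/10, 2/10, 2/10)ᵀ`. -/
theorem markov_iterates_converge :
    Tendsto (fun n : ℕ => (markovM ^ n).mulVec ![1/6, 1/6, 1/6, 1/6, 1/6, 1/6]) atTop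
      (nhds ![1/10, 2/10, 2/10, 1/10, 2/10, 2/10]) := by
  simp only [iter_eq]
  rw [tendsto_pi_nhds]
  have h0 : Tendsto (fun n : ℕ => (1/6:ℝ)^n) atTop (nhds 0) := by
    apply tendsto_pow_atTop_nhds_zero_of_lt_one <;> norm_num
  intro i
  fin_cases i <;> simp only [iterVec, Matrix.cons_val_zero, Matrix.cons_val_one,
    Matrix.head_cons, Matrix.cons_val_fin_one, Matrix.cons_val', Matrix.cons_val_succ] <;>
  first
  | simpa using (tendsto_const_nhds (x := (1/10:ℝ))).add (h0.div_const 15)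
  | simpa using (tendsto_const_nhds (x := (2/10:ℝ))).sub (h0.div_const 30)
end
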